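/- Let W ∈ ℝ^{c×r} be a convolutional weight matrix, let γ be the fully connected matrix construction determined by m injective index maps S₁,…,S_m, let Z ∈ ℝ^{d×n} be a fixed input matrix, and let a > 0. For every ε > 0 there exists a finite set U of matrices in ℝ^{cm×n} with cardinality |U| ≤ (1 + 2a√m‖Z‖_F/ε)^{cr} such that for every W with ‖W‖_F ≤ a there is some u ∈ U with ‖γ(W)Z − u‖_F ≤ ε. -/

import Mathlib

open MeasureTheory Metric
open scoped ENNReal NNReal

noncomputable def frobNorm {α β : Type*} [Fintype α] [Fintype β] (M : Matrix α β ℝ) : ℝ :=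
  Real.sqrt (∑ i, ∑ j, (M i j) ^ 2)

/-- The fully connected matrix `γ(W) ∈ ℝ^{cm×d}` built from a convolutional weight
`W ∈ ℝ^{c×r}` via `m` index maps `S k : Fin r → Fin d`. -/
noncomputable def gamma {c r d m : ℕ} (S : Fin m → Fin r → Fin d)
    (W : Matrix (Fin c) (Fin r) ℝ) : Matrix (Fin c × Fin m) (Fin d) ℝ :=
  fun ik j => ∑ p, if S ik.2 p = j then W ik.1 p else 0

/-- Any `δ`-separated subset of the `a`-ball in ℝ^ι has at most `(1 + 2a/δ)^|ι|` points. -/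
lemma sep_card_le {ι : Type*} [Fintype ι] [Nonempty ι] (a δ : ℝ) (ha : 0 < a) (hδ : 0 < δ)
    (T : Finset (EuclideanSpace ℝ ι)) (hT : ∀ x ∈ T, ‖x‖ ≤ a)
    (hsep : ∀ x ∈ T, ∀ y ∈ T, x ≠ y → δ < dist x y) :
    (T.card : ℝ) ≤ (1 + 2 * a / δ) ^ (Fintype.card ι) := by
  set N := Fintype.card ι
  have hfin : Module.finrank ℝ (EuclideanSpace ℝ ι) = N := finrank_euclideanSpace
  have hsub : ∀ x ∈ T, ball x (δ/2) ⊆ ball (0 : EuclideanSpace ℝ ι) (a + δ/2) := by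
    intro x hx z hz
    simp only [mem_ball] at hz ⊢
    have hxa := hT x hx
    calc dist z 0 ≤ dist z x + dist x 0 := dist_triangle _ _ _
      _ < δ/2 + a := by rw [dist_zero_right]; linarith
      _ = a + δ/2 := by ring
  have hdisj : (T : Set (EuclideanSpace ℝ ι)).PairwiseDisjoint (fun x => ball x (δ/2)) := by
    intro x hx y hy hxy
    apply Set.disjoint_left.2
    intro z hzx hzy
    have := hsep x hx y hy hxy
    have h1 : dist x y ≤ dist x z + dist z y := dist_triangle _ _ _
    simp only [mem_ball] at hzx hzy
    rw [dist_comm x z] at h1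
    linarith
  have hmes : (T.card : ℝ≥0∞) * volume (ball (0 : EuclideanSpace ℝ ι) (δ/2))
      ≤ volume (ball (0 : EuclideanSpace ℝ ι) (a + δ/2)) := by
    calc (T.card : ℝ≥0∞) * volume (ball (0 : EuclideanSpace ℝ ι) (δ/2))
        = ∑ x ∈ T, volume (ball x (δ/2)) := by
          rw [Finset.sum_congr rfl fun x _ => Measure.addHaar_ball_center volume x (δ/2)]
          simp [mul_comm]
      _ = volume (⋃ x ∈ T, ball x (δ/2)) :=
          (measure_biUnion_finset hdisj fun x _ => measurableSet_ball).symm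
      _ ≤ volume (ball (0 : EuclideanSpace ℝ ι) (a + δ/2)) := by
          apply measure_mono
          exact Set.iUnion₂_subset hsub
  rw [Measure.addHaar_ball volume _ (by linarith : (0:ℝ) ≤ δ/2),
      Measure.addHaar_ball volume _ (by linarith : (0:ℝ) ≤ a + δ/2), hfin, ← mul_assoc] at hmes
  have hB0 : volume (ball (0 : EuclideanSpace ℝ ι) 1) ≠ 0 :=
    (Metric.measure_ball_pos volume 0 one_pos).ne'
  have hBt : volume (ball (0 : EuclideanSpace ℝ ι) 1) ≠ ⊤ := measure_ball_lt_top.ne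
  rw [ENNReal.mul_le_mul_iff_left hB0 hBt] at hmes
  have h2 : ENNReal.ofReal ((T.card : ℝ) * (δ/2)^N) ≤ ENNReal.ofReal ((a + δ/2)^N) := by
    rwa [ENNReal.ofReal_mul (by positivity), ENNReal.ofReal_natCast]
  have h3 : (T.card : ℝ) * (δ/2)^N ≤ (a + δ/2)^N :=
    (ENNReal.ofReal_le_ofReal_iff (by positivity)).1 h2
  have h4 : (0:ℝ) < (δ/2)^N := by positivity
  rw [← le_div_iff₀ h4] at h3
  calc (T.card : ℝ) ≤ (a + δ/2)^N / (δ/2)^N := h3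
    _ = ((a + δ/2)/(δ/2))^N := (div_pow _ _ _).symm
    _ = (1 + 2*a/δ)^N := by
        congr 1
        field_simp
        ring

/-- A `(1 + 2a/δ)^|ι|`-sized `δ`-cover of the `a`-ball in ℝ^ι. -/
lemma euclid_cover {ι : Type*} [Fintype ι] [Nonempty ι] (a δ : ℝ) (ha : 0 < a) (hδ : 0 < δ) :
    ∃ P : Finset (EuclideanSpace ℝ ι), (P.card : ℝ) ≤ (1 + 2 * a / δ) ^ (Fintype.card ι) ∧
      ∀ x : EuclideanSpace ℝ ι, ‖x‖ ≤ a → ∃ p ∈ P, ‖x - p‖ ≤ δ := by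
  classical
  set good : Finset (EuclideanSpace ℝ ι) → Prop :=
    fun T => (∀ x ∈ T, ‖x‖ ≤ a) ∧ ∀ x ∈ T, ∀ y ∈ T, x ≠ y → δ < dist x y with hgood
  set cards : Set ℕ := {k | ∃ T, good T ∧ T.card = k} with hcards
  have hne : cards.Nonempty := ⟨0, ∅, ⟨by simp, by simp⟩, rfl⟩
  have hbdd : BddAbove cards := by
    refine ⟨⌈(1 + 2 * a / δ) ^ (Fintype.card ι)⌉₊, ?_⟩
    rintro k ⟨T, hTg, rfl⟩
    have := sep_card_le a δ ha hδ T hTg.1 hTg.2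
    exact_mod_cast this.trans (Nat.le_ceil _)
  obtain ⟨T, hTg, hTcard⟩ : sSup cards ∈ cards := Nat.sSup_mem hne hbdd
  refine ⟨T, ?_, ?_⟩
  · exact sep_card_le a δ ha hδ T hTg.1 hTg.2
  · intro x hx
    by_contra hcon
    push_neg at hcon
    have hxy : ∀ p ∈ T, δ < dist x p := by
      intro p hp
      rw [dist_eq_norm]
      exact hcon p hp
    have hxT : x ∉ T := fun hmem => by
      have := hxy x hmem
      simp at this
      linarith
    have hgood' : good (insert x T) := by
      constructor
      · intro y hy
        rcases Finset.mem_insert.1 hy with h | h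
        · exact h ▸ hx
        · exact hTg.1 y h
      · intro y hy z hz hyz
        rcases Finset.mem_insert.1 hy with h1 | h1 <;> rcases Finset.mem_insert.1 hz with h2 | h2
        · exact absurd (h1.trans h2.symm) hyz
        · exact h1 ▸ hxy z h2
        · rw [dist_comm]; exact h2 ▸ hxy y h1
        · exact hTg.2 y h1 z h2 hyz
    have hlt : sSup cards < (insert x T).card := by
      rw [Finset.card_insert_of_notMem hxT, hTcard]
      omega
    exact absurd (le_csSup hbdd ⟨_, hgood', rfl⟩) (not_le.2 hlt)

noncomputable def toE {c r : ℕ} (W : Matrix (Fin c) (Fin r) ℝ) :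
    EuclideanSpace ℝ (Fin c × Fin r) := WithLp.toLp 2 (fun p => W p.1 p.2)

noncomputable def fromE {c r : ℕ} (x : EuclideanSpace ℝ (Fin c × Fin r)) :
    Matrix (Fin c) (Fin r) ℝ := fun i j => x (i, j)

lemma frobNorm_eq_norm {c r : ℕ} (W : Matrix (Fin c) (Fin r) ℝ) :
    frobNorm W = ‖toE W‖ := by
  rw [EuclideanSpace.norm_eq, frobNorm]
  congr 1
  rw [Fintype.sum_prod_type]
  exact Finset.sum_congr rfl fun i _ => Finset.sum_congr rfl fun j _ => by
    rw [Real.norm_eq_abs, sq_abs]; rfl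

lemma frobNorm_nonneg {α β : Type*} [Fintype α] [Fintype β] (M : Matrix α β ℝ) :
    0 ≤ frobNorm M := Real.sqrt_nonneg _

lemma gamma_mul_apply {c r d m n : ℕ} (S : Fin m → Fin r → Fin d)
    (W : Matrix (Fin c) (Fin r) ℝ) (Z : Matrix (Fin d) (Fin n) ℝ)
    (i : Fin c) (k : Fin m) (j : Fin n) :
    (gamma S W * Z) (i, k) j = ∑ p, W i p * Z (S k p) j := by
  rw [Matrix.mul_apply]
  simp only [gamma, Finset.sum_mul, ite_mul, zero_mul]
  rw [Finset.sum_comm]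
  exact Finset.sum_congr rfl fun p _ => by
    rw [Finset.sum_ite_eq (Finset.univ) (S k p) (fun q => W i p * Z q j)]
    simp

lemma gamma_sub {c r d m : ℕ} (S : Fin m → Fin r → Fin d)
    (W W' : Matrix (Fin c) (Fin r) ℝ) :
    gamma S (W - W') = gamma S W - gamma S W' := by
  funext ik j
  simp only [gamma, Matrix.sub_apply, ← Finset.sum_sub_distrib]
  exact Finset.sum_congr rfl fun p _ => by split <;> simp

lemma gamma_mul_norm_le {c r d m n : ℕ} (S : Fin m → Fin r → Fin d)
    (hS : ∀ k, Function.Injective (S k))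
    (W : Matrix (Fin c) (Fin r) ℝ) (Z : Matrix (Fin d) (Fin n) ℝ) :
    frobNorm (gamma S W * Z) ≤ Real.sqrt m * frobNorm Z * frobNorm W := by
  have hZn : ∀ j : Fin n, (0:ℝ) ≤ ∑ q, (Z q j)^2 :=
    fun j => Finset.sum_nonneg fun q _ => sq_nonneg _
  have step : ∀ (i : Fin c) (k : Fin m) (j : Fin n),
      ((gamma S W * Z) (i, k) j) ^ 2 ≤ (∑ p, (W i p)^2) * (∑ q, (Z q j)^2) := by
    intro i k j
    rw [gamma_mul_apply]
    have h1 := Finset.sum_mul_sq_le_sq_mul_sq Finset.univ (fun p => W i p)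
      (fun p => Z (S k p) j)
    refine h1.trans ?_
    apply mul_le_mul_of_nonneg_left _ (Finset.sum_nonneg fun p _ => sq_nonneg _)
    have himg : ∑ q ∈ Finset.univ.image (S k), (Z q j)^2 = ∑ p, (Z (S k p) j)^2 :=
      Finset.sum_image fun x _ y _ h => hS k h
    rw [← himg]
    exact Finset.sum_le_sum_of_subset_of_nonneg (Finset.subset_univ _)
      (fun q _ _ => sq_nonneg _)
  have key : ∑ ik : Fin c × Fin m, ∑ j, ((gamma S W * Z) ik j) ^ 2
      ≤ (m : ℝ) * ((∑ q, ∑ j, (Z q j)^2) * (∑ i, ∑ p, (W i p)^2)) := by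
    rw [Fintype.sum_prod_type]
    calc ∑ i, ∑ k, ∑ j, ((gamma S W * Z) (i, k) j) ^ 2
        ≤ ∑ i : Fin c, ∑ _k : Fin m, ∑ j, (∑ p, (W i p)^2) * (∑ q, (Z q j)^2) := by
          refine Finset.sum_le_sum fun i _ => Finset.sum_le_sum fun k _ =>
            Finset.sum_le_sum fun j _ => step i k j
      _ = (m : ℝ) * ((∑ q, ∑ j, (Z q j)^2) * (∑ i, ∑ p, (W i p)^2)) := by
          rw [Finset.sum_comm (s := (Finset.univ : Finset (Fin d)))]
          simp only [← Finset.sum_mul, ← Finset.mul_sum, Finset.sum_const, Finset.card_univ,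
            Fintype.card_fin, nsmul_eq_mul]
          ring
  have h0 : (0:ℝ) ≤ (m : ℝ) := Nat.cast_nonneg m
  calc frobNorm (gamma S W * Z) = Real.sqrt (∑ ik, ∑ j, ((gamma S W * Z) ik j) ^ 2) := rfl
    _ ≤ Real.sqrt ((m : ℝ) * ((∑ q, ∑ j, (Z q j)^2) * (∑ i, ∑ p, (W i p)^2))) :=
        Real.sqrt_le_sqrt key
    _ = Real.sqrt m * frobNorm Z * frobNorm W := by
        rw [Real.sqrt_mul h0, Real.sqrt_mul (x := ∑ q, ∑ j, (Z q j)^2) (Finset.sum_nonneg fun q _ =>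
          Finset.sum_nonneg fun j _ => sq_nonneg _), frobNorm, frobNorm, mul_assoc]

/-- Covering number bound for a convolutional layer `W ↦ γ(W)Z` with
`‖W‖_F ≤ a`: for every ε > 0 there is a cover of size at most
`(1 + 2a√m‖Z‖_F/ε)^(cr)`. -/
theorem covering_number_conv_layer (c r d m n : ℕ)
    (S : Fin m → Fin r → Fin d) (hS : ∀ k, Function.Injective (S k))
    (Z : Matrix (Fin d) (Fin n) ℝ) (a : ℝ) (ha : 0 < a) :
    ∀ ε > (0 : ℝ), ∃ U : Finset (Matrix (Fin c × Fin m) (Fin n) ℝ),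
      (U.card : ℝ) ≤ (1 + 2 * a * Real.sqrt m * frobNorm Z / ε) ^ (c * r) ∧
      ∀ W : Matrix (Fin c) (Fin r) ℝ, frobNorm W ≤ a →
        ∃ u ∈ U, frobNorm (gamma S W * Z - u) ≤ ε := by
  classical
  intro ε hε
  set L : ℝ := Real.sqrt m * frobNorm Z with hL
  have hL0 : 0 ≤ L := mul_nonneg (Real.sqrt_nonneg _) (frobNorm_nonneg _)
  have hbase : (1:ℝ) ≤ 1 + 2 * a * Real.sqrt m * frobNorm Z / ε := by
    have : 0 ≤ 2 * a * Real.sqrt m * frobNorm Z / ε :=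
      div_nonneg (mul_nonneg (mul_nonneg (by linarith) (Real.sqrt_nonneg _))
        (frobNorm_nonneg _)) hε.le
    linarith
  have hlip : ∀ W W' : Matrix (Fin c) (Fin r) ℝ,
      frobNorm (gamma S W * Z - gamma S W' * Z) ≤ L * frobNorm (W - W') := by
    intro W W'
    have : gamma S W * Z - gamma S W' * Z = gamma S (W - W') * Z := by
      rw [gamma_sub, Matrix.sub_mul]
    rw [this]
    exact gamma_mul_norm_le S hS (W - W') Z
  by_cases hdeg : c = 0 ∨ r = 0 ∨ L = 0
  · -- degenerate case: a single-element cover suffices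
    refine ⟨{gamma S 0 * Z}, ?_, ?_⟩
    · simp only [Finset.card_singleton, Nat.cast_one]
      exact one_le_pow₀ hbase
    · intro W hW
      refine ⟨gamma S 0 * Z, Finset.mem_singleton_self _, ?_⟩
      have hz : L * frobNorm (W - 0) = 0 := by
        rcases hdeg with h | h | h
        · subst h
          have : frobNorm (W - 0) = 0 := by
            simp [frobNorm, Finset.univ_eq_empty]
          rw [this, mul_zero]
        · subst h
          have : frobNorm (W - 0) = 0 := by
            simp [frobNorm, Finset.univ_eq_empty]
          rw [this, mul_zero]
        · rw [h, zero_mul]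
      have := hlip W 0
      rw [hz] at this
      linarith
  · push_neg at hdeg
    obtain ⟨hc, hr, hLne⟩ := hdeg
    have hLpos : 0 < L := lt_of_le_of_ne hL0 (Ne.symm hLne)
    have : Nonempty (Fin c × Fin r) :=
      ⟨(⟨0, Nat.pos_of_ne_zero hc⟩, ⟨0, Nat.pos_of_ne_zero hr⟩)⟩
    set δ : ℝ := ε / L with hδdef
    have hδ : 0 < δ := div_pos hε hLpos
    obtain ⟨P, hPcard, hPcov⟩ := euclid_cover (ι := Fin c × Fin r) a δ ha hδ
    refine ⟨P.image (fun p => gamma S (fromE p) * Z), ?_, ?_⟩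
    · calc ((P.image (fun p => gamma S (fromE p) * Z)).card : ℝ)
          ≤ (P.card : ℝ) := by exact_mod_cast Finset.card_image_le
        _ ≤ (1 + 2 * a / δ) ^ (Fintype.card (Fin c × Fin r)) := hPcard
        _ = (1 + 2 * a * Real.sqrt m * frobNorm Z / ε) ^ (c * r) := by
            rw [Fintype.card_prod, Fintype.card_fin, Fintype.card_fin]
            congr 1
            rw [hδdef, div_div_eq_mul_div, hL]
            ring
    · intro W hW
      rw [frobNorm_eq_norm] at hW
      obtain ⟨p, hp, hdist⟩ := hPcov (toE W) hW
      refine ⟨gamma S (fromE p) * Z, Finset.mem_image_of_mem _ hp, ?_⟩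
      have heq : toE (W - fromE p) = toE W - p := by
        ext q
        rfl
      have h1 : frobNorm (W - fromE p) = ‖toE W - p‖ := by
        rw [frobNorm_eq_norm, heq]
      calc frobNorm (gamma S W * Z - gamma S (fromE p) * Z)
          ≤ L * frobNorm (W - fromE p) := hlip W (fromE p)
        _ = L * ‖toE W - p‖ := by rw [h1]
        _ ≤ L * δ := mul_le_mul_of_nonneg_left hdist hL0
        _ = ε := by rw [hδdef, mul_div_cancel₀ _ hLne]
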